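/- If an alphabet Σ is partitioned into finitely many groups Σ_T (indexed by tasks T) and an ω-word u over an alphabet of (assignment, service) pairs satisfies the locality condition—each letter's service belongs to exactly one group and only modifies propositions of that group—then swapping two adjacent letters whose services belong to different groups yields a word with the same per-group projections: for every T, π_T(u) = π_T(u') where u' is u with positions i, i+1 swapped. -/

import Mathlib

/-- The projection of (a prefix of length `n` of) an ω-word onto task `S`: keep the
letters whose service belongs to `Σ_S`, restricting the assignment to the propositions
of `P_S`. -/
def projPrefix {𝒯 P Srv : Type*} [DecidableEq 𝒯] (taskP : P → 𝒯) (taskS : Srv → 𝒯)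
    (S : 𝒯) (u : ℕ → (P → Bool) × Srv) (n : ℕ) :
    List (({p : P // taskP p = S} → Bool) × Srv) :=
  ((((List.range n).map u).filter fun l => decide (taskS l.2 = S)).map
    fun l => (fun p => l.1 p.1, l.2))

/-- The word obtained from `u` by swapping the letters at positions `i` and `i + 1`,
adjusting the position-`i` assignment so that locality is preserved: it equals
`κ_{i-1}` updated on the propositions of the task of `σ_{i+1}` by `κ_{i+1}`. -/
def swapWord {𝒯 P Srv : Type*} [DecidableEq 𝒯] (taskP : P → 𝒯) (taskS : Srv → 𝒯)
    (u : ℕ → (P → Bool) × Srv) (i : ℕ) : ℕ → (P → Bool) × Srv := fun j =>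
  if j = i then
    (fun p => if taskP p = taskS (u (i + 1)).2 then (u (i + 1)).1 p else (u (i - 1)).1 p,
      (u (i + 1)).2)
  else if j = i + 1 then ((u (i + 1)).1, (u i).2)
  else u j

/-- Projection over an arbitrary list of positions. -/
def projList {𝒯 P Srv : Type*} [DecidableEq 𝒯] (taskP : P → 𝒯) (taskS : Srv → 𝒯)
    (S : 𝒯) (u : ℕ → (P → Bool) × Srv) (L : List ℕ) :
    List (({p : P // taskP p = S} → Bool) × Srv) :=
  (((L.map u).filter fun l => decide (taskS l.2 = S)).map
    fun l => (fun p => l.1 p.1, l.2))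

lemma projPrefix_eq_projList {𝒯 P Srv : Type*} [DecidableEq 𝒯] (taskP : P → 𝒯)
    (taskS : Srv → 𝒯) (S : 𝒯) (u : ℕ → (P → Bool) × Srv) (n : ℕ) :
    projPrefix taskP taskS S u n = projList taskP taskS S u (List.range n) := rfl

lemma projList_append {𝒯 P Srv : Type*} [DecidableEq 𝒯] (taskP : P → 𝒯)
    (taskS : Srv → 𝒯) (S : 𝒯) (u : ℕ → (P → Bool) × Srv) (L₁ L₂ : List ℕ) :
    projList taskP taskS S u (L₁ ++ L₂) =
      projList taskP taskS S u L₁ ++ projList taskP taskS S u L₂ := by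
  simp [projList, List.filter_append]

lemma projList_congr {𝒯 P Srv : Type*} [DecidableEq 𝒯] (taskP : P → 𝒯)
    (taskS : Srv → 𝒯) (S : 𝒯) (u v : ℕ → (P → Bool) × Srv) (L : List ℕ)
    (h : ∀ j ∈ L, u j = v j) :
    projList taskP taskS S u L = projList taskP taskS S v L := by
  unfold projList
  rw [List.map_congr_left h]

/-- Swapping two adjacent letters of a local ω-word whose services belong to different
tasks leaves all per-task projections unchanged. -/
theorem swap_preserves_projections {𝒯 P Srv : Type*} [DecidableEq 𝒯]
    (taskP : P → 𝒯) (taskS : Srv → 𝒯) (u : ℕ → (P → Bool) × Srv)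
    (hloc : ∀ i : ℕ, ∀ p : P,
      taskP p ≠ taskS (u (i + 1)).2 → (u (i + 1)).1 p = (u i).1 p)
    (i : ℕ) (hi : 1 ≤ i) (T T' : 𝒯)
    (hT : taskS (u i).2 = T) (hT' : taskS (u (i + 1)).2 = T') (hne : T ≠ T') :
    ∀ (S : 𝒯) (n : ℕ),
      projPrefix taskP taskS S (swapWord taskP taskS u i) (i + 2 + n) =
        projPrefix taskP taskS S u (i + 2 + n) := by
  intro S n
  have hw := swapWord taskP taskS u i
  have hrange : List.range (i + 2 + n) =
      List.range i ++ [i] ++ [i + 1] ++ (List.range n).map ((i + 2) + ·) := by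
    rw [List.range_add]
    congr 1
    rw [show i + 2 = (i + 1) + 1 from rfl, List.range_succ, List.range_succ]
  rw [projPrefix_eq_projList, projPrefix_eq_projList, hrange]
  rw [projList_append, projList_append, projList_append,
      projList_append, projList_append, projList_append]
  have h1 : projList taskP taskS S (swapWord taskP taskS u i) (List.range i) =
      projList taskP taskS S u (List.range i) := by
    apply projList_congr
    intro j hj
    rw [List.mem_range] at hj
    simp [swapWord, Nat.ne_of_lt hj, Nat.ne_of_lt (Nat.lt_succ_of_lt hj)]
  have h4 : projList taskP taskS S (swapWord taskP taskS u i)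
        ((List.range n).map ((i + 2) + ·)) =
      projList taskP taskS S u ((List.range n).map ((i + 2) + ·)) := by
    apply projList_congr
    intro j hj
    rw [List.mem_map] at hj
    obtain ⟨k, _, rfl⟩ := hj
    have h1 : i + 2 + k ≠ i := by omega
    have h2 : i + 2 + k ≠ i + 1 := by omega
    simp [swapWord, h1, h2]
  rw [h1, h4]
  congr 1
  -- middle part: positions i and i+1
  have hs1 : swapWord taskP taskS u i i =
      (fun p => if taskP p = taskS (u (i + 1)).2 then (u (i + 1)).1 p else (u (i - 1)).1 p,
        (u (i + 1)).2) := by simp [swapWord]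
  have hs2 : swapWord taskP taskS u i (i + 1) = ((u (i + 1)).1, (u i).2) := by
    simp [swapWord]
  simp only [projList, List.map_cons, List.map_nil, hs1, hs2]
  by_cases hST : S = T
  · subst hST
    have hne1 : taskS (u (i + 1)).2 ≠ S := by rw [hT']; exact Ne.symm hne
    have hfun : (fun (p : {p // taskP p = S}) => (u (i + 1)).1 p.1) =
        fun p => (u i).1 p.1 := by
      funext p
      exact hloc i p.1 (by rw [p.2]; exact fun h => hne1 h.symm)
    simp [List.filter, hT, hne1, hfun]
  · by_cases hST' : S = T'
    · subst hST'
      have hne1 : taskS (u i).2 ≠ S := by rw [hT]; exact hne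
      have hfun : (fun (p : {p // taskP p = S}) =>
          if taskP p.1 = S then (u (i + 1)).1 p.1
          else (u (i - 1)).1 p.1) = fun p => (u (i + 1)).1 p.1 := by
        funext p
        rw [if_pos p.2]
      simp [List.filter, hne1, hT', hfun]
    · have h1 : taskS (u i).2 ≠ S := by rw [hT]; exact fun h => hST h.symm
      have h2 : taskS (u (i + 1)).2 ≠ S := by rw [hT']; exact fun h => hST' h.symm
      simp [List.filter, h1, h2]
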